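/- Suppose β ≠ z, β̂ ∉ {z, −z}, and βᵀβ̂ − (βᵀz)(β̂ᵀz) ≠ 0. Then there exists ρ* ∈ ℝ such that the point x = β̂(ρ*) on the geodesic satisfies x ∈ S_β (i.e., γ_{β,z} − γ_{x,z} γ_{x,β} = 0) and x ≠ z. -/

import Mathlib

open Filter
open scoped Topology

/-- Euclidean inner product on `Fin N → ℝ`. -/
noncomputable def dotp {N : ℕ} (x y : Fin N → ℝ) : ℝ := ∑ i, x i * y i

/-- The point `β̂(ρ) = (β̂ + ρ z)/‖β̂ + ρ z‖₂` on the geodesic through `β̂` and `z`. -/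
noncomputable def geo {N : ℕ} (b z : Fin N → ℝ) (ρ : ℝ) : Fin N → ℝ :=
  fun i => (b i + ρ * z i) / Real.sqrt (∑ j, (b j + ρ * z j) ^ 2)

lemma dotp_sq_lt_one {N : ℕ} (x y : Fin N → ℝ) (hx : dotp x x = 1) (hy : dotp y y = 1)
    (h1 : x ≠ y) (h2 : x ≠ -y) : (dotp x y)^2 < 1 := by
  let X : EuclideanSpace ℝ (Fin N) := WithLp.toLp 2 x
  let Y : EuclideanSpace ℝ (Fin N) := WithLp.toLp 2 y
  have hX : ‖X‖ = 1 := by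
    rw [EuclideanSpace.norm_eq]
    have : ∑ i, x i ^ 2 = 1 := by simpa [dotp, pow_two] using hx
    simp [X, this]
  have hY : ‖Y‖ = 1 := by
    rw [EuclideanSpace.norm_eq]
    have : ∑ i, y i ^ 2 = 1 := by simpa [dotp, pow_two] using hy
    simp [Y, this]
  have hinner : (inner ℝ X Y : ℝ) = dotp x y := by
    simp [PiLp.inner_apply, RCLike.inner_apply, dotp, X, Y, mul_comm]
  have hcs : |(inner ℝ X Y : ℝ)| ≤ 1 := by
    have := abs_real_inner_le_norm X Y
    rwa [hX, hY, mul_one] at this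
  have hne1 : (inner ℝ X Y : ℝ) ≠ 1 := by
    intro h
    exact h1 (by simpa [X, Y] using congrArg WithLp.ofLp ((inner_eq_one_iff_of_norm_eq_one hX hY).mp h))
  have hnen1 : (inner ℝ X Y : ℝ) ≠ -1 := by
    intro h
    have hY' : ‖-Y‖ = 1 := by rwa [norm_neg]
    have : (inner ℝ X (-Y) : ℝ) = 1 := by rw [inner_neg_right, h]; ring
    exact h2 (by simpa [X, Y] using congrArg WithLp.ofLp ((inner_eq_one_iff_of_norm_eq_one hX hY').mp this))
  have habs : |(inner ℝ X Y : ℝ)| < 1 := by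
    rcases lt_or_eq_of_le hcs with h | h
    · exact h
    · rcases abs_eq (by norm_num : (0:ℝ) ≤ 1) |>.mp h with h' | h'
      · exact absurd h' hne1
      · exact absurd h' hnen1
  rw [← hinner]
  have := abs_lt.mp habs
  nlinarith [this.1, this.2]

/-- if `β ≠ z`, `β̂ ∉ {z, −z}` and `βᵀβ̂ − (βᵀz)(β̂ᵀz) ≠ 0`, then some point
`x = β̂(ρ*)` of the geodesic lies in `S_β = {x : ‖x‖ = 1, γ_{β,z} − γ_{x,z} γ_{x,β} = 0}`
and differs from `z`. -/
theorem dispersion_bias_stmt5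
    (N : ℕ) (hN : 2 ≤ N) (β bhat z : Fin N → ℝ)
    (hβ : dotp β β = 1) (hb : dotp bhat bhat = 1) (hz : dotp z z = 1)
    (hβz : β ≠ z) (hbz : bhat ≠ z) (hbz' : bhat ≠ -z)
    (hD : dotp β bhat - dotp β z * dotp bhat z ≠ 0) :
    ∃ ρ : ℝ,
      dotp (geo bhat z ρ) (geo bhat z ρ) = 1 ∧
      dotp β z - dotp (geo bhat z ρ) z * dotp (geo bhat z ρ) β = 0 ∧
      geo bhat z ρ ≠ z := by
  set a : ℝ := dotp β bhat with ha
  set c : ℝ := dotp β z with hc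
  set d : ℝ := dotp bhat z with hd
  have hD' : a - c * d ≠ 0 := hD
  set ρ : ℝ := (c - a * d) / (a - c * d) with hρ
  have hd2 : d ^ 2 < 1 := dotp_sq_lt_one bhat z hb hz hbz hbz'
  -- the squared norm of bhat + ρ z
  have hsum : ∑ j, (bhat j + ρ * z j) ^ 2 = 1 + 2 * ρ * d + ρ ^ 2 := by
    have h1 : ∑ j, (bhat j + ρ * z j) ^ 2
        = ∑ j, (bhat j * bhat j + (2 * ρ) * (bhat j * z j) + ρ ^ 2 * (z j * z j)) := by
      apply Finset.sum_congr rfl; intro j _; ring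
    rw [h1, Finset.sum_add_distrib, Finset.sum_add_distrib, ← Finset.mul_sum, ← Finset.mul_sum]
    have hb' : ∑ j, bhat j * bhat j = 1 := hb
    have hz' : ∑ j, z j * z j = 1 := hz
    have hd' : ∑ j, bhat j * z j = d := rfl
    rw [hb', hz', hd']; ring
  have hn2pos : 0 < 1 + 2 * ρ * d + ρ ^ 2 := by nlinarith [sq_nonneg (ρ + d)]
  set n : ℝ := Real.sqrt (∑ j, (bhat j + ρ * z j) ^ 2) with hn
  have hnpos : 0 < n := by
    rw [hn, hsum]; exact Real.sqrt_pos.mpr hn2pos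
  have hn2 : n ^ 2 = 1 + 2 * ρ * d + ρ ^ 2 := by
    rw [hn, hsum, Real.sq_sqrt hn2pos.le]
  have hgeo : ∀ i, geo bhat z ρ i = (bhat i + ρ * z i) / n := fun i => rfl
  refine ⟨ρ, ?_, ?_, ?_⟩
  · -- norm one
    have key1 : dotp (geo bhat z ρ) (geo bhat z ρ)
        = (∑ j, (bhat j + ρ * z j) ^ 2) / n ^ 2 := by
      unfold dotp
      rw [Finset.sum_div]
      apply Finset.sum_congr rfl; intro j _
      rw [hgeo]; ring
    rw [key1, hsum, ← hn2, div_self (by positivity)]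
  · -- the defining equation of S_β
    have hgz : dotp (geo bhat z ρ) z = (d + ρ) / n := by
      unfold dotp
      have e1 : ∑ i, geo bhat z ρ i * z i
          = ∑ i, (bhat i * z i + ρ * (z i * z i)) / n := by
        apply Finset.sum_congr rfl; intro i _
        rw [hgeo]; ring
      rw [e1, ← Finset.sum_div, Finset.sum_add_distrib, ← Finset.mul_sum]
      have hz' : ∑ j, z j * z j = 1 := hz
      have hd' : ∑ j, bhat j * z j = d := rfl
      rw [hz', hd', mul_one]
    have hgβ : dotp (geo bhat z ρ) β = (a + ρ * c) / n := by
      unfold dotp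
      have e1 : ∑ i, geo bhat z ρ i * β i
          = ∑ i, (β i * bhat i + ρ * (β i * z i)) / n := by
        apply Finset.sum_congr rfl; intro i _
        rw [hgeo]; ring
      rw [e1, ← Finset.sum_div, Finset.sum_add_distrib, ← Finset.mul_sum]
      have ha' : ∑ j, β j * bhat j = a := rfl
      have hc' : ∑ j, β j * z j = c := rfl
      rw [ha', hc']
    rw [hgz, hgβ]
    have e2 : (d + ρ) / n * ((a + ρ * c) / n) = (d + ρ) * (a + ρ * c) / n ^ 2 := by ring
    rw [e2, hn2]
    have hkey : c * (1 + 2 * ρ * d + ρ ^ 2) - (d + ρ) * (a + ρ * c) = 0 := by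
      rw [hρ]; field_simp; ring
    rw [sub_eq_zero, eq_div_iff hn2pos.ne']
    linarith [hkey]
  · -- geo ≠ z
    intro hzeq
    have hbi : ∀ i, bhat i = (n - ρ) * z i := by
      intro i
      have h := congrFun hzeq i
      rw [hgeo] at h
      have h2 : bhat i + ρ * z i = n * z i := by
        field_simp at h
        linarith [h]
      linarith [h2, mul_comm n (z i)]
    have hsq : (n - ρ) ^ 2 = 1 := by
      have : dotp bhat bhat = (n - ρ) ^ 2 * dotp z z := by
        unfold dotp
        rw [Finset.mul_sum]
        apply Finset.sum_congr rfl; intro i _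
        rw [hbi]; ring
      rw [hb, hz, mul_one] at this
      exact this.symm
    have : (n - ρ - 1) * (n - ρ + 1) = 0 := by nlinarith [hsq]
    rcases mul_eq_zero.mp this with h | h
    · apply hbz
      funext i
      rw [hbi i]
      have : n - ρ = 1 := by linarith
      rw [this, one_mul]
    · apply hbz'
      funext i
      rw [hbi i]
      have : n - ρ = -1 := by linarith
      rw [this]
      simp
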